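/- Under a change of the pair (Y, Z) of the form Y' = αY + (element of D₂), Z' = βZ + (element of D₅) with α, β ≠ 0, the matrix (a_{ij}) defined by [Xᵢ, [Y', X_j]] ≡ a'_{ij} Z' mod D₅ satisfies (a'_{ij}) = (α/β)(a_{ij}); in particular the rank and the signature up to sign of (a_{ij}) are independent of the choice of Y and Z. -/
import Mathlib

/-- Under a change `Y' = α•Y + w` (`w ∈ D₂`), `Z' = β•Z + u` (`u ∈ D₅`) with
`α, β ≠ 0`, the matrix `(a'_{ij})` defined by `⁅Xᵢ, ⁅Y', Xⱼ⁆⁆ ≡ a'_{ij} • Z' mod D₅`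
satisfies `a'_{ij} = (α/β) a_{ij}`; in particular the rank of `(a_{ij})` is
independent of the choice of `Y` and `Z`. -/
theorem stmt_3 (g : Type*) [LieRing g] [LieAlgebra ℝ g]
    (X₁ X₂ Y Y₁ Y₂ Z : g)
    (hindep : LinearIndependent ℝ ![X₁, X₂, Y, Y₁, Y₂, Z])
    (hspan : Submodule.span ℝ {X₁, X₂, Y, Y₁, Y₂, Z} = ⊤)
    (hY₁ : Y₁ = ⁅Y, X₁⁆) (hY₂ : Y₂ = ⁅Y, X₂⁆) (hX : ⁅X₁, X₂⁆ = 0)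
    (α β : ℝ) (hα : α ≠ 0) (hβ : β ≠ 0) (w u : g)
    (hw : w ∈ Submodule.span ℝ {X₁, X₂})
    (hu : u ∈ Submodule.span ℝ {X₁, X₂, Y, Y₁, Y₂})
    (a a' : Fin 2 → Fin 2 → ℝ)
    (ha : ∀ i j, ⁅![X₁, X₂] i, ⁅Y, ![X₁, X₂] j⁆⁆ - a i j • Z ∈
        Submodule.span ℝ {X₁, X₂, Y, Y₁, Y₂})
    (ha' : ∀ i j, ⁅![X₁, X₂] i, ⁅α • Y + w, ![X₁, X₂] j⁆⁆ - a' i j • (β • Z + u) ∈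
        Submodule.span ℝ {X₁, X₂, Y, Y₁, Y₂}) :
    (∀ i j, a' i j = (α / β) * a i j) ∧
    (Matrix.of a').rank = (Matrix.of a).rank := by
  set D₅ : Submodule ℝ g := Submodule.span ℝ {X₁, X₂, Y, Y₁, Y₂} with hD₅
  -- Z ∉ D₅
  have hZ : Z ∉ D₅ := by
    have h5 : (5 : Fin 6) ∉ ({0,1,2,3,4} : Set (Fin 6)) := by decide
    have := hindep.notMem_span_image h5
    have himg : (![X₁, X₂, Y, Y₁, Y₂, Z] '' ({0,1,2,3,4} : Set (Fin 6)))
        = {X₁, X₂, Y, Y₁, Y₂} := by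
      ext x
      simp only [Set.mem_image, Set.mem_insert_iff, Set.mem_singleton_iff]
      constructor
      · rintro ⟨i, hi, rfl⟩
        rcases hi with rfl|rfl|rfl|rfl|rfl <;> simp
      · rintro (rfl|rfl|rfl|rfl|rfl)
        exacts [⟨0, by simp⟩, ⟨1, by simp⟩, ⟨2, by simp⟩, ⟨3, by simp⟩, ⟨4, by simp⟩]
    rw [himg] at this
    simpa using this
  -- brackets among X's vanish
  have hXX : ∀ i j : Fin 2, ⁅![X₁, X₂] i, ![X₁, X₂] j⁆ = 0 := by
    intro i j
    have h21 : ⁅X₂, X₁⁆ = 0 := by rw [← lie_skew, hX, neg_zero]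
    fin_cases i <;> fin_cases j <;> simp [hX, h21]
  have hwX : ∀ j : Fin 2, ⁅w, ![X₁, X₂] j⁆ = 0 := by
    intro j
    obtain ⟨c, d, rfl⟩ := Submodule.mem_span_pair.mp hw
    have h1 := hXX 0 j
    have h2 := hXX 1 j
    simp only [Matrix.cons_val_zero, Matrix.cons_val_one, Matrix.head_cons] at h1 h2
    simp [add_lie, smul_lie, h1, h2]
  have key : ∀ i j, a' i j = (α / β) * a i j := by
    intro i j
    have e1 := ha i j
    have e2 := ha' i j
    have hbr : ⁅![X₁, X₂] i, ⁅α • Y + w, ![X₁, X₂] j⁆⁆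
        = α • ⁅![X₁, X₂] i, ⁅Y, ![X₁, X₂] j⁆⁆ := by
      rw [add_lie, smul_lie, hwX j, add_zero, lie_smul]
    rw [hbr] at e2
    have hcomb : (α * a i j - β * a' i j) • Z
        = (α • ⁅![X₁, X₂] i, ⁅Y, ![X₁, X₂] j⁆⁆ - a' i j • (β • Z + u))
          - α • (⁅![X₁, X₂] i, ⁅Y, ![X₁, X₂] j⁆⁆ - a i j • Z)
          + a' i j • u := by
      module
    have hmem : (α * a i j - β * a' i j) • Z ∈ D₅ := by
      rw [hcomb]
      exact add_mem (sub_mem e2 (Submodule.smul_mem _ _ e1)) (Submodule.smul_mem _ _ hu)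
    have hc0 : α * a i j - β * a' i j = 0 := by
      by_contra hc
      exact hZ (by simpa [smul_smul, inv_mul_cancel₀ hc] using
        Submodule.smul_mem D₅ (α * a i j - β * a' i j)⁻¹ hmem)
    field_simp
    linarith [sub_eq_zero.mp hc0]
  refine ⟨key, ?_⟩
  have hM : (Matrix.of a') = (α / β) • (Matrix.of a) := by
    ext i j
    simp [key i j]
  have hab : (α / β) ≠ 0 := div_ne_zero hα hβ
  have hmvl : ((α / β) • (Matrix.of a)).mulVecLin = (α / β) • (Matrix.of a).mulVecLin := by
    ext v i
    simp [Matrix.mulVecLin, Matrix.smul_mulVec]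
  rw [hM, Matrix.rank, hmvl, LinearMap.range_smul _ _ hab, Matrix.rank]
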